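/- arXiv:2008.08554 — 3 statements merged into one kernel-verified Lean document; each statement's English description precedes it below -/
import Mathlib

section
/- Each of the 10 quadrics listed for n = 4, λ = (3,1) vanishes on all real symmetric 4×4 matrices of the form Q D Q^T where Q is orthogonal and D = diag(μ, μ, μ, ν). -/
open Matrix

/-- Each of the 10 quadrics listed for `n = 4`, `λ = (3,1)` vanishes on every real
symmetric 4×4 matrix of the form `Q D Qᵀ` with `Q` orthogonal and
`D = diag(μ,μ,μ,ν)`. Here `x i j` denotes the `(i,j)` entry of `A = Q D Qᵀ`
(indices shifted by one relative to the paper). -/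
theorem quadrics_vanish_on_V31 (μ ν : ℝ) (Q : Matrix (Fin 4) (Fin 4) ℝ)
    (horth : Qᵀ * Q = 1) :
    (let A := Q * diagonal ![μ, μ, μ, ν] * Qᵀ;
      let x11 := A 0 0; let x12 := A 0 1; let x13 := A 0 2; let x14 := A 0 3;
      let x22 := A 1 1; let x23 := A 1 2; let x24 := A 1 3;
      let x33 := A 2 2; let x34 := A 2 3; let x44 := A 3 3;
      -x12 * x34 + x13 * x24 = 0 ∧
      -x12 * x24 + x13 * x34 + x14 * x22 - x14 * x33 = 0 ∧
      -x12 * x34 + x14 * x23 = 0 ∧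
      x12 * x33 - x12 * x44 - x13 * x23 + x14 * x24 = 0 ∧
      -x12 * x23 + x13 * x22 - x13 * x44 + x14 * x34 = 0 ∧
      x11 * x34 - x13 * x14 - x22 * x34 + x23 * x24 = 0 ∧
      x11 * x24 - x12 * x14 + x23 * x34 - x24 * x33 = 0 ∧
      -x11 * x33 + x11 * x44 + x13 ^ 2 - x14 ^ 2 + x22 * x33 - x22 * x44
        - x23 ^ 2 + x24 ^ 2 = 0 ∧
      x11 * x23 - x12 * x13 - x23 * x44 + x24 * x34 = 0 ∧
      -x11 * x22 + x11 * x44 + x12 ^ 2 - x14 ^ 2 + x22 * x33 - x23 ^ 2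
        - x33 * x44 + x34 ^ 2 = 0) := by
  have hQQ : Q * Qᵀ = 1 := mul_eq_one_comm.mp horth
  have hA : ∀ i j : Fin 4, (Q * diagonal ![μ, μ, μ, ν] * Qᵀ) i j
      = μ * (if i = j then (1:ℝ) else 0) + (ν - μ) * (Q i 3 * Q j 3) := by
    intro i j
    have h := congrFun (congrFun hQQ i) j
    simp [Matrix.mul_apply, Fin.sum_univ_four, Matrix.one_apply] at h ⊢
    split_ifs at h ⊢ <;> linear_combination μ * h
  intro A x11 x12 x13 x14 x22 x23 x24 x33 x34 x44
  simp only [x11, x12, x13, x14, x22, x23, x24, x33, x34, x44, A, hA]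
  simp only [Fin.reduceEq, if_false, if_true, reduceIte]
  refine ⟨?_, ?_, ?_, ?_, ?_, ?_, ?_, ?_, ?_, ?_⟩ <;> first | ring | trivial
end

section
/- Each of the 7 cubics listed for n = 3, λ = (2,1) vanishes on every real symmetric 3×3 matrix with a repeated eigenvalue (i.e., of the form Q diag(μ,μ,ν) Q^T with Q orthogonal). -/
open Matrix

/-- Each of the 7 cubics listed for `n = 3`, `λ = (2,1)` vanishes on every real
symmetric 3×3 matrix with a repeated eigenvalue, i.e. of the form `Q diag(μ,μ,ν) Qᵀ`
with `Q` orthogonal. Here `x i j` denotes the `(i,j)` entry of `A = Q diag(μ,μ,ν) Qᵀ`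
(indices shifted by one relative to the paper). -/
theorem cubics_vanish_on_V21 (μ ν : ℝ) (Q : Matrix (Fin 3) (Fin 3) ℝ)
    (horth : Qᵀ * Q = 1) :
    (let A := Q * diagonal ![μ, μ, ν] * Qᵀ;
      let x11 := A 0 0; let x12 := A 0 1; let x13 := A 0 2;
      let x22 := A 1 1; let x23 := A 1 2; let x33 := A 2 2;
      -x11 * x13 * x22 + x11 * x13 * x33 + x12 ^ 2 * x13 - x12 * x22 * x23
        + x12 * x23 * x33 - x13 ^ 3 + x13 * x22 ^ 2 - x13 * x22 * x33 = 0 ∧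
      -x12 ^ 2 * x23 + x12 * x13 * x22 - x12 * x13 * x33 + x13 ^ 2 * x23 = 0 ∧
      -x11 * x13 * x23 + x12 * x13 ^ 2 - x12 * x23 ^ 2 + x13 * x22 * x23 = 0 ∧
      x11 * x12 * x23 - x11 * x13 * x22 + x11 * x13 * x33 - x12 * x22 * x23
        - x13 ^ 3 + x13 * x22 ^ 2 - x13 * x22 * x33 + x13 * x23 ^ 2 = 0 ∧
      -x11 * x12 * x22 + x11 * x12 * x33 - x11 * x13 * x23 + x12 ^ 3
        + x12 * x22 * x33 - x12 * x23 ^ 2 - x12 * x33 ^ 2 + x13 * x23 * x33 = 0 ∧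
      -x11 ^ 2 * x23 + x11 * x12 * x13 + x11 * x22 * x23 + x11 * x23 * x33
        - x12 ^ 2 * x23 - x12 * x13 * x33 - x22 * x23 * x33 + x23 ^ 3 = 0 ∧
      x11 ^ 2 * x22 - x11 ^ 2 * x33 - x11 * x12 ^ 2 + x11 * x13 ^ 2 - x11 * x22 ^ 2
        + x11 * x33 ^ 2 + x12 ^ 2 * x22 - x13 ^ 2 * x33 + x22 ^ 2 * x33
        - x22 * x23 ^ 2 - x22 * x33 ^ 2 + x23 ^ 2 * x33 = 0) := by
  have hQQ : Q * Qᵀ = 1 := mul_eq_one_comm.mp horth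
  have e : ∀ i j, (Q * diagonal ![μ, μ, ν] * Qᵀ) i j
      = μ * (1 : Matrix (Fin 3) (Fin 3) ℝ) i j + (ν - μ) * (Q i 2 * Q j 2) := by
    intro i j
    have h := congrFun (congrFun hQQ i) j
    simp only [Matrix.mul_apply, Fin.sum_univ_three, Matrix.transpose_apply,
      Matrix.diagonal_apply, Matrix.cons_val_zero, Matrix.cons_val_one, Matrix.head_cons,
      Matrix.cons_val_two, Matrix.tail_cons] at h ⊢
    fin_cases i <;> fin_cases j <;> simp_all <;> linear_combination μ * h
  simp only [e, Matrix.one_apply, Fin.reduceEq, reduceIte, Fin.zero_eq_one_iff,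
    Fin.one_eq_zero_iff, if_true, if_false]
  norm_num
  refine ⟨by ring, by ring, by ring, by ring, by ring, by ring, by ring⟩
end

section
/- The sum over nonempty subsets formula for the Hilbert polynomial of the λ-diagonal subspace arrangement specializes so that its leading term gives degree n!/(λ_1!···λ_m!): that is, the polynomial h(t) = Σ_{i=1}^{⌈n/(n-m)⌉-1} (-1)^{i+1} C(N, i) C(t+n-1-i(n-m), n-1-i(n-m)), with N = n!/(λ_1!···λ_m!) and m < n, has degree m-1 in t and leading coefficient N/(m-1)!. -/
open Polynomial

/-- For a partition `λ = (λ₁,…,λ_m)` of `n` with `m < n`, set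
`N = n!/(λ₁!⋯λ_m!)`. The Hilbert polynomial
`h(t) = Σ_{i=1}^{⌈n/(n-m)⌉-1} (-1)^{i+1} C(N,i) C(t+n-1-i(n-m), n-1-i(n-m))`
of the λ-diagonal subspace arrangement has degree `m-1` in `t` and leading
coefficient `N/(m-1)!`.  Here `C(t+d, d)` (with `d = n-1-i(n-m)`) is the binomial
coefficient polynomial `(t+d)(t+d-1)⋯(t+1)/d!`, expressed via `descPochhammer`. -/
theorem hilbert_polynomial_degree_and_leading_coeff (n m : ℕ) (lam : Fin m → ℕ)
    (hpos : ∀ i, 0 < lam i) (hsum : ∑ i, lam i = n) (hmn : m < n) :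
    (let N : ℕ := n.factorial / ∏ i, (lam i).factorial;
     let h : Polynomial ℚ :=
       ∑ i ∈ Finset.Icc 1 ((n + (n - m) - 1) / (n - m) - 1),
         ((-1 : ℚ) ^ (i + 1) * (N.choose i : ℚ) /
             ((n - 1 - i * (n - m)).factorial : ℚ)) •
           ((descPochhammer ℚ (n - 1 - i * (n - m))).comp
             (X + C ((n - 1 - i * (n - m) : ℕ) : ℚ)));
     h.natDegree = m - 1 ∧ h.leadingCoeff = (N : ℚ) / ((m - 1).factorial : ℚ)) := by
  have hm : 1 ≤ m := by
    rcases Nat.eq_zero_or_pos m with h0 | h0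
    · subst h0; simp at hsum; omega
    · exact h0
  dsimp only
  set N := n.factorial / ∏ i, (lam i).factorial with hN
  have hNpos : 0 < N := by
    have := Nat.multinomial_pos (Finset.univ : Finset (Fin m)) lam
    rwa [Nat.multinomial, hsum] at this
  set T := (n + (n - m) - 1) / (n - m) - 1 with hT
  have hT1 : 1 ≤ T := by
    have : 2 ≤ (n + (n - m) - 1) / (n - m) := by
      rw [Nat.le_div_iff_mul_le (by omega)]
      omega
    omega
  have hsplit : Finset.Icc 1 T = insert 1 (Finset.Icc 2 T) := by
    ext x; simp only [Finset.mem_Icc, Finset.mem_insert]; omega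
  rw [hsplit, Finset.sum_insert (by simp)]
  have hd1 : n - 1 - 1 * (n - m) = m - 1 := by omega
  rw [hd1]
  set c : ℚ := (-1 : ℚ) ^ (1 + 1) * (N.choose 1 : ℚ) / ((m - 1).factorial : ℚ) with hc
  set P : Polynomial ℚ :=
    (descPochhammer ℚ (m - 1)).comp (X + C ((m - 1 : ℕ) : ℚ)) with hP
  have hPmonic : P.Monic := (monic_descPochhammer ℚ (m - 1)).comp_X_add_C _
  have hPdeg : P.natDegree = m - 1 := by
    rw [hP, natDegree_comp, descPochhammer_natDegree, natDegree_X_add_C, mul_one]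
  have hcval : c = (N : ℚ) / ((m - 1).factorial : ℚ) := by
    rw [hc, Nat.choose_one_right]
    ring
  have hcne : c ≠ 0 := by
    rw [hcval]
    positivity
  have hF1 : (c • P).degree = ((m - 1 : ℕ) : WithBot ℕ) := by
    rw [smul_eq_C_mul, degree_C_mul hcne, degree_eq_natDegree hPmonic.ne_zero, hPdeg]
  set S : Polynomial ℚ := ∑ i ∈ Finset.Icc 2 T,
      ((-1 : ℚ) ^ (i + 1) * (N.choose i : ℚ) /
          ((n - 1 - i * (n - m)).factorial : ℚ)) •
        ((descPochhammer ℚ (n - 1 - i * (n - m))).comp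
          (X + C ((n - 1 - i * (n - m) : ℕ) : ℚ))) with hSdef
  have hS : (∑ i ∈ Finset.Icc 2 T,
      ((-1 : ℚ) ^ (i + 1) * (N.choose i : ℚ) /
          ((n - 1 - i * (n - m)).factorial : ℚ)) •
        ((descPochhammer ℚ (n - 1 - i * (n - m))).comp
          (X + C ((n - 1 - i * (n - m) : ℕ) : ℚ)))).degree
      < ((m - 1 : ℕ) : WithBot ℕ) := by
    clear_value S
    refine lt_of_le_of_lt (degree_sum_le _ _) ?_
    rw [Finset.sup_lt_iff (by exact WithBot.bot_lt_coe _)]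
    intro i hi
    simp only [Finset.mem_Icc] at hi
    have hQm : ((descPochhammer ℚ (n - 1 - i * (n - m))).comp
        (X + C ((n - 1 - i * (n - m) : ℕ) : ℚ))).Monic :=
      (monic_descPochhammer ℚ _).comp_X_add_C _
    have hQd : ((descPochhammer ℚ (n - 1 - i * (n - m))).comp
        (X + C ((n - 1 - i * (n - m) : ℕ) : ℚ))).natDegree = n - 1 - i * (n - m) := by
      rw [natDegree_comp, descPochhammer_natDegree, natDegree_X_add_C, mul_one]
    refine lt_of_le_of_lt (le_trans (degree_smul_le _ _) degree_le_natDegree) ?_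
    rw [hQd]
    rw [Nat.cast_lt]
    have h4 : T * (n - m) ≤ n - 1 := by
      rw [hT, Nat.sub_mul, one_mul]
      exact le_trans (Nat.sub_le_sub_right (Nat.div_mul_le_self _ _) _) (by omega)
    have h2 : i * (n - m) ≤ T * (n - m) := Nat.mul_le_mul_right _ hi.2
    have h3 : 2 * (n - m) ≤ i * (n - m) := Nat.mul_le_mul_right _ hi.1
    have h5 : i * (n - m) ≤ n - 1 := le_trans h2 h4
    generalize i * (n - m) = x at h3 h5
    omega
  have hdeg : (c • P + S).degree = ((m - 1 : ℕ) : WithBot ℕ) := by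
    rw [degree_add_eq_left_of_degree_lt (by rw [hF1]; exact hS), hF1]
  constructor
  · exact natDegree_eq_of_degree_eq_some hdeg
  · rw [add_comm, leadingCoeff_add_of_degree_lt (by rw [hF1]; exact hS)]
    rw [smul_eq_C_mul, leadingCoeff_mul, leadingCoeff_C, hPmonic.leadingCoeff, mul_one, hcval]
end
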